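/- Let N, L be positive natural numbers, K ∈ ℝ^{N×N} a symmetric matrix, y : {1,…,N} → {1,…,L}, e ∈ ℝ^{N×L}, and fix an index t ∈ {1,…,N} with e_{tl} = 1 − δ_{l,y_t} for all l (δ the Kronecker delta). Let α, γ ∈ ℝ^{N×L} satisfy: Σ_{l=1}^L γ_{il} = 0 for every i; and for every i ≠ t there exists a constant c_i ∈ ℝ such that Σ_{j=1}^N α_{jl} K_{ij} + e_{il} = c_i for every l with γ_{il} ≠ 0. Then Σ_{i=1}^N Σ_{l=1}^L γ_{il}·(Σ_{j=1}^N α_{jl} K_{ij} + e_{il}) = Σ_{l=1}^L γ_{tl}·(Σ_{j=1}^N α_{jl} K_{tj}) − γ_{t,y_t}. -/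
import Mathlib


/-- Reduction step (final equality in equations (11) and (13)) in the proof of
Theorem 1 of the MU-SVM span-bound derivation. -/
theorem stmt_1 {N L : ℕ} (hN : 0 < N) (hL : 0 < L)
    (K : Matrix (Fin N) (Fin N) ℝ) (hK : K.IsSymm)
    (y : Fin N → Fin L) (e : Fin N → Fin L → ℝ) (t : Fin N)
    (he : ∀ l, e t l = 1 - (if l = y t then (1 : ℝ) else 0))
    (α γ : Fin N → Fin L → ℝ)
    (hsum : ∀ i, ∑ l, γ i l = 0)
    (hconst : ∀ i, i ≠ t → ∃ c : ℝ, ∀ l, γ i l ≠ 0 → (∑ j, α j l * K i j) + e i l = c) :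
    ∑ i, ∑ l, γ i l * ((∑ j, α j l * K i j) + e i l)
      = (∑ l, γ t l * (∑ j, α j l * K t j)) - γ t (y t) := by
  have hzero : ∀ i, i ≠ t → ∑ l, γ i l * ((∑ j, α j l * K i j) + e i l) = 0 := by
    intro i hi
    obtain ⟨c, hc⟩ := hconst i hi
    have : ∀ l ∈ Finset.univ, γ i l * ((∑ j, α j l * K i j) + e i l) = γ i l * c := by
      intro l _
      by_cases h : γ i l = 0
      · simp [h]
      · rw [hc l h]
    rw [Finset.sum_congr rfl this, ← Finset.sum_mul, hsum i, zero_mul]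
  rw [Finset.sum_eq_single t (fun i _ hi => hzero i hi) (by simp)]
  have : ∀ l ∈ Finset.univ, γ t l * ((∑ j, α j l * K t j) + e t l)
      = γ t l * (∑ j, α j l * K t j) + γ t l - γ t l * (if l = y t then (1:ℝ) else 0) := by
    intro l _
    rw [he l]; ring
  rw [Finset.sum_congr rfl this]
  have h1 : ∑ l, γ t l * (if l = y t then (1:ℝ) else 0) = γ t (y t) := by
    simp [Finset.sum_ite_eq']
  simp only [Finset.sum_sub_distrib, Finset.sum_add_distrib, hsum t, h1, add_zero]
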